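/- Let p > 3 be a prime with p ≡ -1 (mod 6), q an odd power of p, and F a field containing F_q. For any point P = (x, y) on the curve y² = x³ + t^q − t with x, y ∈ F(t), the order of the pole of x at the place at infinity of F(t) is at least (q+1)/3; equivalently ord_∞(x) ≤ −(q+1)/3. -/

import Mathlib

open Multiplicative


/-- For `p > 3` prime with `p ≡ -1 (mod 6)`, `q` an odd power of `p`, and `F`
a field containing `F_q`, any point `(x, y)` on `y² = x³ + t^q − t` with `x, y ∈ F(t)` has
`ord_∞(x) ≤ −(q+1)/3`, i.e. `3 · intDegree x ≥ q + 1` (where `ord_∞ x = −intDegree x`). -/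
theorem pole_order_at_infinity (p c q : ℕ) [Fact p.Prime] (hp3 : 3 < p) (hp6 : p % 6 = 5)
    (hc : Odd c) (hq : q = p ^ c)
    (F : Type*) [Field F] [CharP F p] (φ : GaloisField p c →+* F)
    (x y : RatFunc F)
    (hxy : y ^ 2 = x ^ 3 + (RatFunc.X ^ q - RatFunc.X)) :
    (q + 1 : ℤ) ≤ 3 * x.intDegree := by
  classical
  -- basic facts about q
  have hp2 : p % 2 = 1 := by omega
  have hp3' : p % 3 = 2 := by omega
  have hqodd : Odd q := by
    rw [hq]; exact (Nat.odd_iff.mpr hp2).pow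
  have hq3 : ¬ (3 ∣ q) := by
    rw [hq]
    intro h
    have := Nat.Prime.dvd_of_dvd_pow (p := 3) (by norm_num) h
    omega
  have hq1 : 1 < q := by
    have hc1 : 1 ≤ c := hc.pos
    calc 1 < p := by omega
    _ ≤ p ^ c := Nat.le_self_pow (by omega) p
    _ = q := hq.symm
  set v := FunctionField.inftyValuation F with hv
  -- value of t^q - t
  have hTpoly : (RatFunc.X ^ q - RatFunc.X : RatFunc F)
      = algebraMap (Polynomial F) (RatFunc F) (Polynomial.X ^ q - Polynomial.X) := by
    simp [map_sub, map_pow, RatFunc.algebraMap_X]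
  have hdeg : (Polynomial.X ^ q - Polynomial.X : Polynomial F).natDegree = q := by
    rw [Polynomial.natDegree_sub_eq_left_of_natDegree_lt]
    · exact Polynomial.natDegree_X_pow q
    · rw [Polynomial.natDegree_X_pow, Polynomial.natDegree_X]; omega
  have hTne : (Polynomial.X ^ q - Polynomial.X : Polynomial F) ≠ 0 := by
    intro h
    rw [h, Polynomial.natDegree_zero] at hdeg
    omega
  have hT : v (RatFunc.X ^ q - RatFunc.X) = ↑(ofAdd (q : ℤ)) := by
    rw [hTpoly]
    rw [show v (algebraMap (Polynomial F) (RatFunc F) (Polynomial.X ^ q - Polynomial.X))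
      = RatFunc.inftyValuationDef F _ from rfl,
      RatFunc.inftyValuation.polynomial F hTne, WithZero.exp_eq_coe_ofAdd, hdeg]
  by_contra hcon
  push_neg at hcon
  have hlt : 3 * x.intDegree < q := by
    rcases lt_or_eq_of_le (Int.lt_add_one_iff.mp hcon) with h | h
    · exact h
    · exfalso; apply hq3
      have : (3 : ℤ) ∣ q := ⟨x.intDegree, h.symm⟩
      exact_mod_cast this
  -- v (x^3) < v (t^q - t)
  have hx3 : v (x ^ 3) < ↑(ofAdd (q : ℤ)) := by
    by_cases hx0 : x = 0
    · rw [hx0]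
      simp only [zero_pow, ne_eq, OfNat.ofNat_ne_zero, not_false_eq_true, map_zero]
      exact WithZero.zero_lt_coe _
    · have : v (x ^ 3) = ↑(ofAdd (3 * x.intDegree)) := by
        rw [map_pow]
        rw [show v x = RatFunc.inftyValuationDef F x from rfl,
          RatFunc.inftyValuation_of_nonzero F hx0, WithZero.exp_eq_coe_ofAdd, ← WithZero.coe_pow]
        congr 1
      rw [this, WithZero.coe_lt_coe, Multiplicative.ofAdd_lt]
      exact hlt
  have hmax : v (y ^ 2) = ↑(ofAdd (q : ℤ)) := by
    rw [hxy, Valuation.map_add_of_distinct_val, hT, max_eq_right hx3.le]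
    rw [hT]; exact hx3.ne
  have hy0 : y ≠ 0 := by
    intro h
    rw [h] at hmax
    simp at hmax
  have : (ofAdd (2 * y.intDegree) : Multiplicative ℤ) = ofAdd (q : ℤ) := by
    have h2 : v (y ^ 2) = ↑(ofAdd (2 * y.intDegree)) := by
      rw [map_pow, show v y = RatFunc.inftyValuationDef F y from rfl,
        RatFunc.inftyValuation_of_nonzero F hy0, WithZero.exp_eq_coe_ofAdd, ← WithZero.coe_pow]
      congr 1
    rw [h2] at hmax
    exact_mod_cast hmax
  have h2q : 2 * y.intDegree = (q : ℤ) := by exact_mod_cast Multiplicative.ofAdd.injective this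
  have : Even (q : ℤ) := ⟨y.intDegree, by omega⟩
  rw [Int.even_coe_nat] at this
  exact (Nat.not_even_iff_odd.mpr hqodd) this
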